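/- Let Δ be a simplicial complex and let k > 0 be an integer with f_k(Δ) > 0. Then the chain of strict inequalities f_0(Δ) > (2!·f_1(Δ))^{1/2} > (3!·f_2(Δ))^{1/3} > (4!·f_3(Δ))^{1/4} > … > ((k+1)!·f_k(Δ))^{1/(k+1)} holds; that is, for every integer j with 1 ≤ j ≤ k, (j!·f_{j-1}(Δ))^{1/j} > ((j+1)!·f_j(Δ))^{1/(j+1)} as real numbers. -/

import Mathlib

open Finset

namespace SCaux
variable {V : Type*} [DecidableEq V]

/-- faces of size i that extend to a face of size i+1 -/
noncomputable def exCount (Δ : Finset (Finset V)) (i : ℕ) : ℕ :=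
  (Δ.filter fun s => s.card = i ∧ ∃ t ∈ Δ, s ⊆ t ∧ t.card = i + 1).card

def lk (Δ : Finset (Finset V)) (v : V) : Finset (Finset V) :=
  Δ.filter fun s => v ∉ s ∧ insert v s ∈ Δ

def Vs (Δ : Finset (Finset V)) : Finset V := Δ.sup id

def DC (Δ : Finset (Finset V)) : Prop := ∀ B ∈ Δ, ∀ A ⊆ B, A ∈ Δ

def fc (Δ : Finset (Finset V)) (i : ℕ) : ℕ := (Δ.filter fun s => s.card = i).card

lemma lk_dc {Δ : Finset (Finset V)} (h : DC Δ) (v : V) : DC (lk Δ v) := by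
  intro B hB A hA
  simp only [lk, mem_filter] at hB ⊢
  obtain ⟨hBΔ, hvB, hiB⟩ := hB
  exact ⟨h B hBΔ A hA, fun hvA => hvB (hA hvA), h _ hiB _ (insert_subset_insert _ hA)⟩

lemma lk_subset (Δ : Finset (Finset V)) (v : V) : lk Δ v ⊆ Δ := filter_subset _ _

lemma mem_Vs {Δ : Finset (Finset V)} {v : V} {s : Finset V} (hs : s ∈ Δ) (hv : v ∈ s) :
    v ∈ Vs Δ := by
  simp only [Vs, Finset.mem_sup]
  exact ⟨s, hs, hv⟩

/-- I1 : (i+1) * fc Δ (i+1) = ∑ v, fc (lk Δ v) i -/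
lemma I1 {Δ : Finset (Finset V)} (h : DC Δ) (i : ℕ) :
    (i + 1) * fc Δ (i + 1) = ∑ v ∈ Vs Δ, fc (lk Δ v) i := by
  have lhs : (i + 1) * fc Δ (i + 1)
      = ((Δ.filter fun s => s.card = i + 1).sigma fun F => F).card := by
    rw [card_sigma]
    rw [Finset.sum_congr rfl (fun F hF => (mem_filter.1 hF).2)]
    rw [sum_const, smul_eq_mul, mul_comm]
    rfl
  have rhs : ∑ v ∈ Vs Δ, fc (lk Δ v) i
      = ((Vs Δ).sigma fun v => (lk Δ v).filter fun s => s.card = i).card := by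
    rw [card_sigma]; rfl
  rw [lhs, rhs]
  refine card_bij' (fun p _ => ⟨p.2, p.1.erase p.2⟩) (fun p _ => ⟨insert p.1 p.2, p.1⟩) ?_ ?_ ?_ ?_
  · rintro ⟨F, v⟩ hp
    simp only [mem_sigma, mem_filter, lk] at hp ⊢
    obtain ⟨⟨hFΔ, hcard⟩, hv⟩ := hp
    refine ⟨mem_Vs hFΔ hv, ⟨h F hFΔ _ (erase_subset _ _), notMem_erase _ _, by
      rwa [insert_erase hv]⟩, ?_⟩
    rw [card_erase_of_mem hv, hcard]; rfl
  · rintro ⟨v, s⟩ hp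
    simp only [mem_sigma, mem_filter, lk] at hp ⊢
    obtain ⟨hv, ⟨hsΔ, hvs, hins⟩, hcard⟩ := hp
    exact ⟨⟨hins, by rw [card_insert_of_notMem hvs, hcard]⟩, mem_insert_self _ _⟩
  · rintro ⟨F, v⟩ hp
    simp only [mem_sigma, mem_filter] at hp
    simp [insert_erase hp.2]
  · rintro ⟨v, s⟩ hp
    simp only [mem_sigma, mem_filter, lk] at hp
    simp [erase_insert hp.2.1.2.1]

end SCaux

namespace SCaux
variable {V : Type*} [DecidableEq V]

/-- I2 : same as I1 for extendable faces -/
lemma I2 {Δ : Finset (Finset V)} (h : DC Δ) (i : ℕ) :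
    (i + 1) * exCount Δ (i + 1) = ∑ v ∈ Vs Δ, exCount (lk Δ v) i := by
  have lhs : (i + 1) * exCount Δ (i + 1)
      = ((Δ.filter fun s => s.card = i + 1 ∧ ∃ t ∈ Δ, s ⊆ t ∧ t.card = i + 1 + 1).sigma
          fun F => F).card := by
    rw [card_sigma]
    rw [Finset.sum_congr rfl (fun F hF => (mem_filter.1 hF).2.1)]
    rw [sum_const, smul_eq_mul, mul_comm]
    rfl
  have rhs : ∑ v ∈ Vs Δ, exCount (lk Δ v) i
      = ((Vs Δ).sigma fun v =>
          (lk Δ v).filter fun s => s.card = i ∧ ∃ t ∈ lk Δ v, s ⊆ t ∧ t.card = i + 1).card := by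
    rw [card_sigma]; rfl
  rw [lhs, rhs]
  refine card_bij' (fun p _ => ⟨p.2, p.1.erase p.2⟩) (fun p _ => ⟨insert p.1 p.2, p.1⟩) ?_ ?_ ?_ ?_
  · rintro ⟨F, v⟩ hp
    unfold lk at *
    simp only [mem_sigma, mem_filter, lk] at hp ⊢
    obtain ⟨⟨hFΔ, hcard, T, hTΔ, hFT, hTcard⟩, hv⟩ := hp
    have hvT : v ∈ T := hFT hv
    exact ⟨mem_Vs hFΔ hv,
      ⟨h F hFΔ _ (erase_subset _ _), notMem_erase _ _, by rwa [insert_erase hv]⟩,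
      by rw [card_erase_of_mem hv, hcard]; omega,
      T.erase v, ⟨h T hTΔ _ (erase_subset _ _), notMem_erase _ _, by rwa [insert_erase hvT]⟩,
      erase_subset_erase _ hFT, by rw [card_erase_of_mem hvT, hTcard]; omega⟩
  · rintro ⟨v, s⟩ hp
    unfold lk at *
    simp only [mem_sigma, mem_filter, lk] at hp ⊢
    obtain ⟨hv, ⟨⟨hsΔ, hvs, hins⟩, hcard, τ, ⟨hτΔ, hvτ, hinsτ⟩, hsτ, hτcard⟩⟩ := hp
    refine ⟨⟨hins, by rw [card_insert_of_notMem hvs, hcard], insert v τ, hinsτ,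
      insert_subset_insert _ hsτ, by rw [card_insert_of_notMem hvτ, hτcard]⟩,
      mem_insert_self _ _⟩
  · rintro ⟨F, v⟩ hp
    unfold lk at *
    simp only [mem_sigma, mem_filter, lk] at hp
    simp [insert_erase hp.2]
  · rintro ⟨v, s⟩ hp
    unfold lk at *
    simp only [mem_sigma, mem_filter, lk] at hp
    simp [erase_insert hp.2.1.2.1]

/-- R3 -/
lemma fc_lk_le_ex {Δ : Finset (Finset V)} (v : V) (j : ℕ) :
    fc (lk Δ v) j ≤ exCount Δ j := by
  apply card_le_card
  intro s hs
  simp only [mem_filter, lk] at hs ⊢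
  obtain ⟨⟨hsΔ, hvs, hins⟩, hcard⟩ := hs
  exact ⟨hsΔ, hcard, insert v s, hins, subset_insert _ _,
    by rw [card_insert_of_notMem hvs, hcard]⟩

/-- R4 -/
lemma ex_le_fc (Δ : Finset (Finset V)) (i : ℕ) : exCount Δ i ≤ fc Δ i := by
  apply card_le_card
  intro s hs
  simp only [mem_filter] at hs ⊢
  exact ⟨hs.1, hs.2.1⟩

/-- R6 -/
lemma fc_lk_lt {Δ : Finset (Finset V)} (h : DC Δ) (v : V) {j : ℕ} (hj : 1 ≤ j)
    (hpos : 0 < fc (lk Δ v) j) : fc (lk Δ v) j < fc Δ j := by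
  obtain ⟨σ, hσ⟩ := card_pos.1 hpos
  simp only [mem_filter, lk] at hσ
  obtain ⟨⟨hσΔ, hvσ, hins⟩, hσcard⟩ := hσ
  have hσne : σ.Nonempty := card_pos.1 (hσcard ▸ hj)
  obtain ⟨x, hx⟩ := hσne
  set τ : Finset V := insert v (σ.erase x) with hτ
  have hvτ : v ∈ τ := mem_insert_self _ _
  have hτΔ : τ ∈ Δ := by
    apply h _ hins
    exact insert_subset_insert _ (erase_subset _ _)
  have hτcard : τ.card = j := by
    rw [hτ, card_insert_of_notMem (fun hc => hvσ (erase_subset _ _ hc)),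
      card_erase_of_mem hx, hσcard]
    omega
  apply card_lt_card
  constructor
  · intro s hs
    simp only [mem_filter, lk] at hs ⊢
    exact ⟨hs.1.1, hs.2⟩
  · intro hc
    have := hc (mem_filter.2 ⟨hτΔ, hτcard⟩)
    simp only [mem_filter, lk] at this
    exact this.1.2.1 hvτ

/-- base fact : some 1-face exists → empty set is an extendable 0-face -/
lemma ex_zero_pos {Δ : Finset (Finset V)} (h : DC Δ) (hpos : 0 < fc Δ 1) :
    1 ≤ exCount Δ 0 := by
  obtain ⟨σ, hσ⟩ := card_pos.1 hpos
  simp only [mem_filter] at hσ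
  apply card_pos.2
  refine ⟨∅, mem_filter.2 ⟨h _ hσ.1 _ (empty_subset _), card_empty, σ, hσ.1, empty_subset _,
    by rw [hσ.2]⟩⟩

/-- downward closure gives faces of all smaller sizes -/
lemma fc_pos_of_le {Δ : Finset (Finset V)} (h : DC Δ) {m i : ℕ} (him : i ≤ m)
    (hpos : 0 < fc Δ m) : 0 < fc Δ i := by
  obtain ⟨σ, hσ⟩ := card_pos.1 hpos
  simp only [mem_filter] at hσ
  obtain ⟨t, hts, htcard⟩ := Finset.exists_subset_card_eq (him.trans_eq hσ.2.symm)
  exact card_pos.2 ⟨t, mem_filter.2 ⟨h _ hσ.1 _ hts, htcard⟩⟩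

end SCaux

namespace SCaux
variable {V : Type*} [DecidableEq V]

noncomputable def Ar (Δ : Finset (Finset V)) (m : ℕ) : ℝ := (m.factorial * fc Δ m : ℕ)
noncomputable def Br (Δ : Finset (Finset V)) (m : ℕ) : ℝ := (m.factorial * exCount Δ m : ℕ)

lemma Ar_nonneg (Δ : Finset (Finset V)) (m : ℕ) : 0 ≤ Ar Δ m := Nat.cast_nonneg _
lemma Br_nonneg (Δ : Finset (Finset V)) (m : ℕ) : 0 ≤ Br Δ m := Nat.cast_nonneg _

lemma sumA {Δ : Finset (Finset V)} (h : DC Δ) (j : ℕ) :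
    Ar Δ (j + 1) = ∑ v ∈ Vs Δ, Ar (lk Δ v) j := by
  have key : (j + 1).factorial * fc Δ (j + 1) = ∑ v ∈ Vs Δ, j.factorial * fc (lk Δ v) j := by
    rw [← Finset.mul_sum, ← I1 h j, Nat.factorial_succ]; ring
  simp only [Ar]
  rw [key]
  push_cast
  rfl

lemma sumB {Δ : Finset (Finset V)} (h : DC Δ) (j : ℕ) :
    Br Δ (j + 1) = ∑ v ∈ Vs Δ, Br (lk Δ v) j := by
  have key : (j + 1).factorial * exCount Δ (j + 1)
      = ∑ v ∈ Vs Δ, j.factorial * exCount (lk Δ v) j := by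
    rw [← Finset.mul_sum, ← I2 h j, Nat.factorial_succ]; ring
  simp only [Br]
  rw [key]
  push_cast
  rfl

lemma Ar_lk_le_Br (Δ : Finset (Finset V)) (v : V) (j : ℕ) :
    Ar (lk Δ v) j ≤ Br Δ j := by
  have := fc_lk_le_ex (Δ := Δ) v j
  simp only [Ar, Br]
  exact_mod_cast Nat.mul_le_mul_left _ this

lemma Br_le_Ar (Δ : Finset (Finset V)) (j : ℕ) : Br Δ j ≤ Ar Δ j := by
  have := ex_le_fc Δ j
  simp only [Ar, Br]
  exact_mod_cast Nat.mul_le_mul_left _ this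

lemma root_le {j : ℕ} (hj : j ≠ 0) {x c d : ℝ} (hx : 0 ≤ x) (hc : 0 ≤ c) (hd : 0 ≤ d)
    (h : x ^ j ≤ c * d ^ j) : x ≤ c ^ ((1 : ℝ) / j) * d := by
  have h1 : (x ^ j) ^ ((1 : ℝ) / j) ≤ (c * d ^ j) ^ ((1 : ℝ) / j) :=
    Real.rpow_le_rpow (by positivity) h (by positivity)
  have hxj : (x ^ j : ℝ) ^ ((1 : ℝ) / j) = x := by
    rw [← Real.rpow_natCast x j, ← Real.rpow_mul hx]
    rw [mul_one_div, div_self (Nat.cast_ne_zero.2 hj), Real.rpow_one]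
  have hdj : ((d ^ j : ℝ)) ^ ((1 : ℝ) / j) = d := by
    rw [← Real.rpow_natCast d j, ← Real.rpow_mul hd]
    rw [mul_one_div, div_self (Nat.cast_ne_zero.2 hj), Real.rpow_one]
  rwa [hxj, Real.mul_rpow hc (by positivity), hdj] at h1

/-- the assembly step -/
lemma assemble {Δ : Finset (Finset V)} (h : DC Δ) (j : ℕ) (c : ℝ) (hc : 0 ≤ c)
    (hbound : ∀ v ∈ Vs Δ, fc (lk Δ v) (j + 1) = 0 ∨ Ar (lk Δ v) (j + 1) ≤ c)
    (hIH : ∀ v ∈ Vs Δ, 0 < fc (lk Δ v) (j + 1) →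
      (Ar (lk Δ v) (j + 1)) ^ j ≤ (Br (lk Δ v) j) ^ (j + 1)) :
    Ar Δ (j + 2) ≤ c ^ ((1 : ℝ) / ((j + 1 : ℕ) : ℝ)) * Br Δ (j + 1) := by
  rw [sumA h (j + 1), sumB h j, Finset.mul_sum]
  apply Finset.sum_le_sum
  intro v hv
  rcases hbound v hv with h0 | hb
  · have : Ar (lk Δ v) (j + 1) = 0 := by simp [Ar, h0]
    rw [this]
    exact mul_nonneg (Real.rpow_nonneg hc _) (Br_nonneg _ _)
  · rcases Nat.eq_zero_or_pos (fc (lk Δ v) (j + 1)) with h0 | hpos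
    · have : Ar (lk Δ v) (j + 1) = 0 := by simp [Ar, h0]
      rw [this]
      exact mul_nonneg (Real.rpow_nonneg hc _) (Br_nonneg _ _)
    · have hIHv := hIH v hv hpos
      have hx := Ar_nonneg (lk Δ v) (j + 1)
      have hd := Br_nonneg (lk Δ v) j
      apply root_le j.succ_ne_zero hx hc hd
      calc (Ar (lk Δ v) (j + 1)) ^ (j + 1) = (Ar (lk Δ v) (j + 1)) ^ j * Ar (lk Δ v) (j + 1) := by
            ring
        _ ≤ (Br (lk Δ v) j) ^ (j + 1) * c := mul_le_mul hIHv hb hx (by positivity)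
        _ = c * (Br (lk Δ v) j) ^ (j + 1) := by ring
      -- exponent mismatch fix below if needed

lemma rpow_one_div_pow {c : ℝ} (hc : 0 ≤ c) {n : ℕ} (hn : n ≠ 0) :
    (c ^ ((1 : ℝ) / n)) ^ n = c := by
  rw [← Real.rpow_natCast (c ^ ((1 : ℝ) / n)) n, ← Real.rpow_mul hc,
    one_div, inv_mul_cancel₀ (Nat.cast_ne_zero.2 hn), Real.rpow_one]

/-- the main non-strict LW-type inequality, a.k.a. AUX -/
lemma aux : ∀ j : ℕ, ∀ Δ : Finset (Finset V), DC Δ → 0 < fc Δ (j + 1) →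
    (Ar Δ (j + 1)) ^ j ≤ (Br Δ j) ^ (j + 1) := by
  intro j
  induction j with
  | zero =>
    intro Δ h hpos
    simpa [Br] using
      (by exact_mod_cast ex_zero_pos h hpos : (1 : ℝ) ≤ ((exCount Δ 0 : ℕ) : ℝ))
  | succ j ih =>
    intro Δ h hpos
    have hstep := assemble h j (Br Δ (j + 1)) (Br_nonneg _ _)
      (fun v _ => Or.inr (Ar_lk_le_Br Δ v (j + 1)))
      (fun v _ hp => ih (lk Δ v) (lk_dc h v) hp)
    calc (Ar Δ (j + 2)) ^ (j + 1)
        ≤ ((Br Δ (j + 1)) ^ ((1 : ℝ) / ((j + 1 : ℕ) : ℝ)) * Br Δ (j + 1)) ^ (j + 1) := by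
          apply pow_le_pow_left₀ (Ar_nonneg _ _) hstep
      _ = (Br Δ (j + 1)) ^ (j + 2) := by
          rw [mul_pow, rpow_one_div_pow (Br_nonneg _ _) j.succ_ne_zero]
          ring

end SCaux

namespace SCaux
variable {V : Type*} [DecidableEq V]

lemma Ar_pos {Δ : Finset (Finset V)} {m : ℕ} (h : 0 < fc Δ m) : 0 < Ar Δ m := by
  have h2 : 0 < m.factorial * fc Δ m := Nat.mul_pos m.factorial_pos h
  simp only [Ar]
  exact_mod_cast h2

theorem strict {Δ : Finset (Finset V)} (h : DC Δ) {j : ℕ} (hj : 1 ≤ j)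
    (hpos1 : 0 < fc Δ (j + 1)) : (Ar Δ (j + 1)) ^ j < (Ar Δ j) ^ (j + 1) := by
  obtain ⟨m, rfl⟩ : ∃ m, j = m + 1 := ⟨j - 1, by omega⟩
  have hposj : 0 < fc Δ (m + 1) := fc_pos_of_le h (Nat.le_succ _) hpos1
  set c : ℝ := Ar Δ (m + 1) - (m + 1).factorial with hcdef
  have hfc1 : (1 : ℕ) ≤ fc Δ (m + 1) := hposj
  have hc : 0 ≤ c := by
    have : (m + 1).factorial * 1 ≤ (m + 1).factorial * fc Δ (m + 1) :=
      Nat.mul_le_mul_left _ hfc1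
    have := (Nat.cast_le (α := ℝ)).2 this
    push_cast at this
    simp only [hcdef, Ar]
    push_cast
    linarith
  have hbound : ∀ v ∈ Vs Δ, fc (lk Δ v) (m + 1) = 0 ∨ Ar (lk Δ v) (m + 1) ≤ c := by
    intro v _
    rcases Nat.eq_zero_or_pos (fc (lk Δ v) (m + 1)) with h0 | hp
    · exact Or.inl h0
    · right
      have hlt := fc_lk_lt h v (Nat.succ_le_succ (Nat.zero_le m)) hp
      have : (m + 1).factorial * (fc (lk Δ v) (m + 1) + 1) ≤
          (m + 1).factorial * fc Δ (m + 1) := Nat.mul_le_mul_left _ hlt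
      have := (Nat.cast_le (α := ℝ)).2 this
      push_cast at this
      simp only [hcdef, Ar]
      push_cast
      linarith
  have hstep := assemble h m c hc hbound (fun v _ hp => aux m (lk Δ v) (lk_dc h v) hp)
  have hstep2 : Ar Δ (m + 2) ≤ c ^ ((1 : ℝ) / ((m + 1 : ℕ) : ℝ)) * Ar Δ (m + 1) :=
    hstep.trans (mul_le_mul_of_nonneg_left (Br_le_Ar _ _) (Real.rpow_nonneg hc _))
  have hXpos : 0 < Ar Δ (m + 1) := Ar_pos hposj
  calc (Ar Δ (m + 2)) ^ (m + 1)
      ≤ (c ^ ((1 : ℝ) / ((m + 1 : ℕ) : ℝ)) * Ar Δ (m + 1)) ^ (m + 1) :=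
        pow_le_pow_left₀ (Ar_nonneg _ _) hstep2 _
    _ = c * (Ar Δ (m + 1)) ^ (m + 1) := by
        rw [mul_pow, rpow_one_div_pow hc m.succ_ne_zero]
    _ < Ar Δ (m + 1) * (Ar Δ (m + 1)) ^ (m + 1) := by
        apply mul_lt_mul_of_pos_right _ (by positivity)
        have : (0 : ℝ) < (m + 1).factorial := by exact_mod_cast (m + 1).factorial_pos
        simp only [hcdef]
        linarith
    _ = (Ar Δ (m + 1)) ^ (m + 2) := by ring

end SCaux

/-- The number of faces of `Δ` with exactly `i` vertices (i.e. `f_{i-1}(Δ)`). -/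
def faceCount {V : Type*} [DecidableEq V] (Δ : Finset (Finset V)) (i : ℕ) : ℕ :=
  (Δ.filter fun s => s.card = i).card

theorem stmt2 {V : Type*} [DecidableEq V] (Δ : Finset (Finset V))
    (hΔ : ∀ B ∈ Δ, ∀ A ⊆ B, A ∈ Δ)
    (k : ℕ) (hk : 0 < k) (hf : 0 < faceCount Δ (k + 1)) :
    ∀ j : ℕ, 1 ≤ j → j ≤ k →
      ((j.factorial : ℝ) * (faceCount Δ j : ℝ)) ^ ((1 : ℝ) / (j : ℝ)) >
        (((j + 1).factorial : ℝ) * (faceCount Δ (j + 1) : ℝ)) ^ ((1 : ℝ) / ((j : ℝ) + 1)) := by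
  intro j hj hjk
  have hDC : SCaux.DC Δ := hΔ
  have hf' : 0 < SCaux.fc Δ (k + 1) := hf
  have hpos1 : 0 < SCaux.fc Δ (j + 1) :=
    SCaux.fc_pos_of_le hDC (Nat.succ_le_succ hjk) hf'
  have hposj : 0 < SCaux.fc Δ j :=
    SCaux.fc_pos_of_le hDC (Nat.le_succ _) hpos1
  have hkey := SCaux.strict hDC hj hpos1
  set X : ℝ := SCaux.Ar Δ j with hXdef
  set Y : ℝ := SCaux.Ar Δ (j + 1) with hYdef
  have hX0 : 0 < X := SCaux.Ar_pos hposj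
  have hY0 : 0 ≤ Y := SCaux.Ar_nonneg _ _
  have hj0 : (j : ℝ) ≠ 0 := Nat.cast_ne_zero.2 (by omega)
  have hj1 : (j : ℝ) + 1 ≠ 0 := by positivity
  have eX : ((j.factorial : ℝ) * (faceCount Δ j : ℝ)) = X := by
    simp only [hXdef, SCaux.Ar, SCaux.fc, faceCount]
    push_cast
    rfl
  have eY : (((j + 1).factorial : ℝ) * (faceCount Δ (j + 1) : ℝ)) = Y := by
    simp only [hYdef, SCaux.Ar, SCaux.fc, faceCount]
    push_cast
    rfl
  rw [eX, eY]
  set e : ℝ := 1 / ((j : ℝ) * ((j : ℝ) + 1)) with hedef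
  have h1 : (Y ^ j) ^ e < (X ^ (j + 1)) ^ e := by
    apply Real.rpow_lt_rpow (by positivity) hkey
    rw [hedef]
    positivity
  have h2 : (Y ^ j) ^ e = Y ^ ((1 : ℝ) / ((j : ℝ) + 1)) := by
    rw [← Real.rpow_natCast Y j, ← Real.rpow_mul hY0]
    congr 1
    rw [hedef]
    field_simp
  have h3 : (X ^ (j + 1)) ^ e = X ^ ((1 : ℝ) / (j : ℝ)) := by
    rw [← Real.rpow_natCast X (j + 1), ← Real.rpow_mul hX0.le]
    congr 1
    rw [hedef]
    push_cast
    field_simp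
    try ring
  rw [h2, h3] at h1
  exact h1
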